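/- The process of repeatedly removing dead-end assumption lines from a coherent Automath book terminates, and the resulting clean book (containing no dead-end assumption lines) is unique: it is independent of the order in which dead-end lines are removed. -/

import Mathlib

/-- Content of an Automath line: `---`, `PN`, or a term (abstractly a natural number). -/
inductive Content where
  | dash : Content
  | pn : Content
  | term : ℕ → Content
deriving DecidableEq

/-- An Automath line: indicator (`none` = ε), identifier, content, category. -/
structure Line where
  indicator : Option ℕ
  identifier : ℕ
  content : Content
  category : ℕ
deriving DecidableEq

abbrev Book := List Line

def Line.isAssum (l : Line) : Bool := l.content == Content.dash
def Line.isPrim (l : Line) : Bool := l.content == Content.pn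
def Line.isDefin (l : Line) : Bool := match l.content with | .term _ => true | _ => false

/-- Coherence: identifiers pairwise distinct, and each non-ε indicator is the
identifier of an earlier assumption line. -/
def Coherent (B : Book) : Prop :=
  (B.map Line.identifier).Nodup ∧
  ∀ m : ℕ, ∀ L : Line, B[m]? = some L → ∀ y : ℕ, L.indicator = some y →
    ∃ l : ℕ, l < m ∧ ∃ L' : Line, B[l]? = some L' ∧ L'.identifier = y ∧ L'.isAssum

/-- Index of the assumption line introducing identifier `y`. -/
def introIdx (B : Book) (y : ℕ) : Option ℕ :=
  B.findIdx? (fun l => l.identifier == y && l.isAssum)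

/-- Fuel-based computation of the subject-list γ of the line at index `i`. -/
def gammaAux (B : Book) : ℕ → ℕ → List ℕ
  | 0, i =>
    match B[i]? with
    | none => []
    | some l => [l.identifier]
  | fuel+1, i =>
    match B[i]? with
    | none => []
    | some l =>
      match l.indicator with
      | none => [l.identifier]
      | some y =>
        match introIdx B y with
        | none => [l.identifier]
        | some j => gammaAux B fuel j ++ [l.identifier]

/-- Subject-list γ_z of variable `z` (introduced by an assumption line). γ_ε = []. -/
def gammaOf (B : Book) (z : ℕ) : List ℕ :=
  match introIdx B z with
  | none => []
  | some i => gammaAux B i i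

/-- Fuel-based computation of the typing-context Γ of the line at index `i`. -/
def ctxAux (B : Book) : ℕ → ℕ → List (ℕ × ℕ)
  | 0, i =>
    match B[i]? with
    | none => []
    | some l => [(l.identifier, l.category)]
  | fuel+1, i =>
    match B[i]? with
    | none => []
    | some l =>
      match l.indicator with
      | none => [(l.identifier, l.category)]
      | some y =>
        match introIdx B y with
        | none => [(l.identifier, l.category)]
        | some j => ctxAux B fuel j ++ [(l.identifier, l.category)]

/-- Typing-context Γ_z of variable `z`. Γ_ε = ∅. -/
def ctxOf (B : Book) (z : ℕ) : List (ℕ × ℕ) :=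
  match introIdx B z with
  | none => []
  | some i => ctxAux B i i

/-- Subject-list of an indicator (γ_ε = [] for the empty indicator). -/
def gammaInd (B : Book) : Option ℕ → List ℕ
  | none => []
  | some y => gammaOf B y

/-- Typing-context of an indicator. -/
def ctxInd (B : Book) : Option ℕ → List (ℕ × ℕ)
  | none => []
  | some y => ctxOf B y

/-- y ≺ z : some line of `B` has indicator `y` (≠ ε) and identifier `z`. -/
def Prec (B : Book) (y z : ℕ) : Prop :=
  ∃ L ∈ B, L.indicator = some y ∧ L.identifier = z

/-- The line at index `i` is a dead-end assumption line. -/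
def DeadEnd (B : Book) (i : ℕ) : Prop :=
  ∃ L : Line, B[i]? = some L ∧ L.isAssum ∧
    ∀ j : ℕ, i < j → ∀ L' : Line, B[j]? = some L' → L'.indicator ≠ some L.identifier

/-- One removal step: delete a single dead-end assumption line. -/
def Step (B B' : Book) : Prop := ∃ i : ℕ, DeadEnd B i ∧ B' = B.eraseIdx i

/-- A clean book: coherent with no dead-end assumption lines. -/
def IsClean (B : Book) : Prop := Coherent B ∧ ∀ i : ℕ, ¬ DeadEnd B i

/-- An entry of the λD-environment Δ_B. -/
structure Entry where
  ctx : List (ℕ × ℕ)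
  const : ℕ
  args : List ℕ
  content : Content
  category : ℕ

def Fresh (B : Book) (x : ℕ) : Prop := ∀ L ∈ B, L.identifier ≠ x

def IndOk (B : Book) : Option ℕ → Prop
  | none => True
  | some z => ∃ L ∈ B, L.identifier = z ∧ L.isAssum

/-- Well-formed (ok) books with their translation Δ_B, relative to abstract
typing judgements `J Δ Γ M A` (Δ; Γ ⊢ M : A) and `S Δ Γ A` (Δ; Γ ⊢ A : s). -/
inductive Ok (J : List Entry → List (ℕ × ℕ) → ℕ → ℕ → Prop)
    (S : List Entry → List (ℕ × ℕ) → ℕ → Prop) : Book → List Entry → Prop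
  | nil : Ok J S [] []
  | assum {B : Book} {Δ : List Entry} {ind : Option ℕ} {x A : ℕ} :
      Ok J S B Δ → Fresh B x → IndOk B ind → S Δ (ctxInd B ind) A →
      Ok J S (B ++ [⟨ind, x, Content.dash, A⟩]) Δ
  | defin {B : Book} {Δ : List Entry} {ind : Option ℕ} {c M A : ℕ} :
      Ok J S B Δ → Fresh B c → IndOk B ind → J Δ (ctxInd B ind) M A →
      Ok J S (B ++ [⟨ind, c, Content.term M, A⟩])
        (Δ ++ [⟨ctxInd B ind, c, gammaInd B ind, Content.term M, A⟩])
  | prim {B : Book} {Δ : List Entry} {ind : Option ℕ} {c A : ℕ} :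
      Ok J S B Δ → Fresh B c → IndOk B ind → S Δ (ctxInd B ind) A →
      Ok J S (B ++ [⟨ind, c, Content.pn, A⟩])
        (Δ ++ [⟨ctxInd B ind, c, gammaInd B ind, Content.pn, A⟩])

private lemma deadEnd_lt {B : Book} {i : ℕ} (h : DeadEnd B i) : i < B.length := by
  obtain ⟨L, hL, _⟩ := h
  by_contra hc
  rw [List.getElem?_eq_none (by omega)] at hL
  cases hL

private lemma step_length {B B' : Book} (h : Step B B') : B'.length < B.length := by
  obtain ⟨i, hi, rfl⟩ := h
  have := deadEnd_lt hi
  rw [List.length_eraseIdx_of_lt this]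
  omega

private lemma erase_comm (B : Book) {i j : ℕ} (h : i < j) :
    (B.eraseIdx j).eraseIdx i = (B.eraseIdx i).eraseIdx (j - 1) := by
  apply List.ext_getElem?
  intro k
  simp only [List.getElem?_eraseIdx]
  split_ifs <;> first | rfl | omega

private lemma deadEnd_erase_lt {B : Book} {i j : ℕ} (hi : DeadEnd B i) (hij : i < j) :
    DeadEnd (B.eraseIdx j) i := by
  obtain ⟨L, hL, hA, hno⟩ := hi
  refine ⟨L, ?_, hA, ?_⟩
  · rw [List.getElem?_eraseIdx_of_lt hij]; exact hL
  · intro k hk L' hL'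
    rcases lt_or_ge k j with h | h
    · rw [List.getElem?_eraseIdx_of_lt h] at hL'
      exact hno k hk L' hL'
    · rw [List.getElem?_eraseIdx_of_ge h] at hL'
      exact hno (k + 1) (by omega) L' hL'

private lemma deadEnd_erase_gt {B : Book} {i j : ℕ} (hj : DeadEnd B j) (hij : i < j) :
    DeadEnd (B.eraseIdx i) (j - 1) := by
  obtain ⟨L, hL, hA, hno⟩ := hj
  refine ⟨L, ?_, hA, ?_⟩
  · rw [List.getElem?_eraseIdx_of_ge (by omega), (by omega : j - 1 + 1 = j)]
    exact hL
  · intro k hk L' hL'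
    rw [List.getElem?_eraseIdx_of_ge (by omega)] at hL'
    exact hno (k + 1) (by omega) L' hL'

private lemma diamond {B C₁ C₂ : Book} (h1 : Step B C₁) (h2 : Step B C₂) :
    C₁ = C₂ ∨ ∃ D, Step C₁ D ∧ Step C₂ D := by
  obtain ⟨i, hi, rfl⟩ := h1
  obtain ⟨j, hj, rfl⟩ := h2
  rcases lt_trichotomy i j with h | h | h
  · exact Or.inr ⟨(B.eraseIdx i).eraseIdx (j - 1),
      ⟨j - 1, deadEnd_erase_gt hj h, rfl⟩,
      ⟨i, deadEnd_erase_lt hi h, (erase_comm B h).symm⟩⟩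
  · exact Or.inl (by rw [h])
  · exact Or.inr ⟨(B.eraseIdx i).eraseIdx j,
      ⟨j, deadEnd_erase_lt hj h, rfl⟩,
      ⟨i - 1, deadEnd_erase_gt hi h, erase_comm B h⟩⟩

private lemma coherent_step {B B' : Book} (hB : Coherent B) (h : Step B B') :
    Coherent B' := by
  obtain ⟨i, ⟨L, hL, hA, hno⟩, rfl⟩ := h
  obtain ⟨hnd, href⟩ := hB
  refine ⟨hnd.sublist ((B.eraseIdx_sublist i).map Line.identifier), ?_⟩
  intro m M hM y hy
  rcases lt_or_ge m i with hmi | hmi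
  · rw [List.getElem?_eraseIdx_of_lt hmi] at hM
    obtain ⟨l, hl, L', hL', hid, hassum⟩ := href m M hM y hy
    exact ⟨l, hl, L', by
      rw [List.getElem?_eraseIdx_of_lt (by omega)]; exact hL', hid, hassum⟩
  · rw [List.getElem?_eraseIdx_of_ge hmi] at hM
    obtain ⟨l, hl, L', hL', hid, hassum⟩ := href (m + 1) M hM y hy
    have hli : l ≠ i := by
      rintro rfl
      rw [hL] at hL'
      cases hL'
      exact hno (m + 1) (by omega) M hM (by rw [hy, hid])
    rcases lt_or_ge l i with h2 | h2
    · exact ⟨l, by omega, L', by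
        rw [List.getElem?_eraseIdx_of_lt h2]; exact hL', hid, hassum⟩
    · exact ⟨l - 1, by omega, L', by
        rw [List.getElem?_eraseIdx_of_ge (by omega),
          (by omega : l - 1 + 1 = l)]; exact hL', hid, hassum⟩

private lemma clean_no_step {C D : Book} (hC : IsClean C) (h : Step C D) : False := by
  obtain ⟨i, hi, _⟩ := h
  exact hC.2 i hi

private lemma exists_clean (n : ℕ) : ∀ B : Book, B.length ≤ n → Coherent B →
    ∃ C, Relation.ReflTransGen Step B C ∧ IsClean C := by
  induction n with
  | zero =>
    intro B hlen hB
    refine ⟨B, .refl, hB, fun i hi => ?_⟩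
    have := deadEnd_lt hi; omega
  | succ n ih =>
    intro B hlen hB
    by_cases h : ∀ i, ¬ DeadEnd B i
    · exact ⟨B, .refl, hB, h⟩
    · push_neg at h
      obtain ⟨i, hi⟩ := h
      have hstep : Step B (B.eraseIdx i) := ⟨i, hi, rfl⟩
      have hlen' : (B.eraseIdx i).length ≤ n := by
        have := step_length hstep; omega
      obtain ⟨C, hC, hclean⟩ := ih _ hlen' (coherent_step hB hstep)
      exact ⟨C, .head hstep hC, hclean⟩

/-- repeated removal of dead-end assumption lines terminates, a clean
book is reached, and it is unique (independent of the order of removals). -/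
theorem stmt7 (B : Book) (hB : Coherent B) :
    (¬ ∃ f : ℕ → Book, f 0 = B ∧ ∀ n : ℕ, Step (f n) (f (n + 1))) ∧
    (∃ C : Book, Relation.ReflTransGen Step B C ∧ IsClean C) ∧
    (∀ C₁ C₂ : Book, Relation.ReflTransGen Step B C₁ → IsClean C₁ →
      Relation.ReflTransGen Step B C₂ → IsClean C₂ → C₁ = C₂) := by
  refine ⟨?_, exists_clean B.length B le_rfl hB, ?_⟩
  · rintro ⟨f, hf0, hf⟩
    have key : ∀ n, (f n).length + n ≤ (f 0).length := by
      intro n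
      induction n with
      | zero => omega
      | succ n ih => have := step_length (hf n); omega
    have := key ((f 0).length + 1); omega
  · intro C₁ C₂ h1 hc1 h2 hc2
    have hcr : ∀ a b c : Book, Step a b → Step a c →
        ∃ d, Relation.ReflGen Step b d ∧ Relation.ReflTransGen Step c d := by
      intro a b c hab hac
      rcases diamond hab hac with rfl | ⟨d, hbd, hcd⟩
      · exact ⟨b, .refl, .refl⟩
      · exact ⟨d, .single hbd, .single hcd⟩
    obtain ⟨D, hd1, hd2⟩ := Relation.church_rosser hcr h1 h2
    have e1 : C₁ = D := by
      rcases hd1.cases_head with rfl | ⟨d, hd, _⟩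
      · rfl
      · exact absurd hd (fun h => clean_no_step hc1 h)
    have e2 : C₂ = D := by
      rcases hd2.cases_head with rfl | ⟨d, hd, _⟩
      · rfl
      · exact absurd hd (fun h => clean_no_step hc2 h)
    rw [e1, e2]
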